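/- Consider the M/M/n queue with 1 ≤ R = λ/μ < n, δ = 1/√R, ζ = δ(R − n) < 0, and scaled stationary count X̃(∞) = δ(X(∞) − R). Then E[ X̃(∞)² 1{X̃(∞) ≤ −ζ} ] ≤ 4/3 + 2δ²/3. -/

import Mathlib

open MeasureTheory Real

set_option maxHeartbeats 1000000 in
theorem erlangC_second_moment_bound (n : ℕ) (lam mu R δ ζ : ℝ) (ν : ℕ → ℝ)
    (hlam : 0 < lam) (hmu : 0 < mu) (hR : R = lam / mu) (hR1 : 1 ≤ R) (hstable : R < n)
    (hδ : δ = 1 / Real.sqrt R) (hζ : ζ = δ * (R - n))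
    (hν : ∀ k, 0 ≤ ν k) (hsum : ∑' k, ν k = 1)
    (hbal : ∀ k : ℕ, lam * ν k = mu * (min (k + 1) n : ℕ) * ν (k + 1)) :
    (∑' k : ℕ, (if δ * ((k : ℝ) - R) ≤ -ζ then (δ * ((k : ℝ) - R)) ^ 2 else 0) * ν k)
      ≤ 4 / 3 + 2 * δ ^ 2 / 3 := by
  have hRpos : (0:ℝ) < R := lt_of_lt_of_le one_pos hR1
  have hsqrt : (0:ℝ) < Real.sqrt R := Real.sqrt_pos.mpr hRpos
  have hδpos : 0 < δ := by rw [hδ]; positivity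
  have hδ2R : δ ^ 2 * R = 1 := by
    rw [hδ, div_pow, one_pow, Real.sq_sqrt hRpos.le]; field_simp
  have hnR : R < (n:ℝ) := hstable
  have hnpos : (0:ℝ) < n := lt_trans hRpos hnR
  -- balance in R-form
  have hb : ∀ k : ℕ, R * ν k = ((min (k+1) n : ℕ):ℝ) * ν (k+1) := by
    intro k
    have h1 := hbal k
    have hlam' : lam = mu * R := by rw [hR]; field_simp
    rw [hlam'] at h1
    have h2 : mu * (R * ν k) = mu * (((min (k+1) n : ℕ):ℝ) * ν (k+1)) := by
      rw [← mul_assoc, ← mul_assoc]; exact h1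
    exact mul_left_cancel₀ (ne_of_gt hmu) h2
  -- summability of ν
  have hνsummable : Summable ν := by
    by_contra h
    rw [tsum_eq_zero_of_not_summable h] at hsum; norm_num at hsum
  have hνle1 : ∀ k, ν k ≤ 1 := by
    intro k
    calc ν k ≤ ∑' j, ν j := Summable.le_tsum hνsummable k (fun j _ => hν j)
    _ = 1 := hsum
  -- master summability
  have hS2 : Summable (fun k : ℕ => ((k:ℝ)^2 + 1) * ν k) := by
    set q : ℝ := R / n with hq
    have hnpos' : 0 < n := by exact_mod_cast hnpos
    have hq0 : 0 < q := by rw [hq]; positivity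
    have hq1 : q < 1 := by rw [hq]; exact (div_lt_one hnpos).mpr hnR
    have htail : ∀ j : ℕ, ν (n + j) = ν n * q ^ j := by
      intro j
      induction j with
      | zero => simp
      | succ j ih =>
        have h1 := hb (n + j)
        have hmin : min (n + j + 1) n = n := by omega
        rw [hmin] at h1
        have : ν (n + j + 1) = q * ν (n + j) := by
          rw [hq]; field_simp; linarith [h1]
        rw [show n + (j+1) = n + j + 1 from rfl, this, ih, pow_succ]; ring
    set C : ℝ := max 1 (ν n) / q ^ n with hCdef
    have hC1 : ∀ k, ν k ≤ C * q ^ k := by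
      intro k
      rcases le_or_gt n k with h | h
      · obtain ⟨j, rfl⟩ := Nat.exists_eq_add_of_le h
        rw [htail j, hCdef]
        rw [pow_add]
        have heq : max 1 (ν n) / q ^ n * (q ^ n * q ^ j) = max 1 (ν n) * q ^ j := by
          field_simp
        rw [heq]
        exact mul_le_mul_of_nonneg_right (le_max_right _ _) (by positivity)
      · calc ν k ≤ 1 := hνle1 k
          _ ≤ q ^ k / q ^ n := by
              rw [le_div_iff₀ (by positivity), one_mul]
              exact pow_le_pow_of_le_one hq0.le hq1.le h.le
          _ ≤ C * q ^ k := by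
              rw [hCdef, div_mul_eq_mul_div, div_le_div_iff₀ (by positivity) (by positivity)]
              nlinarith [le_max_left 1 (ν n), pow_pos hq0 k, pow_pos hq0 n,
                mul_pos (pow_pos hq0 k) (pow_pos hq0 n)]
    have hgeosum : Summable (fun k : ℕ => ((k:ℝ)^2+1) * (C * q ^ k)) := by
      have h1 : Summable (fun k : ℕ => (k:ℝ)^2 * q ^ k) := by
        simpa using summable_pow_mul_geometric_of_norm_lt_one 2
          (by rwa [Real.norm_eq_abs, abs_of_pos hq0] : ‖q‖ < 1)
      have h2 : Summable (fun k : ℕ => q ^ k) := summable_geometric_of_lt_one hq0.le hq1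
      have := ((h1.add h2).mul_left C)
      refine this.congr (fun k => ?_)
      ring
    apply Summable.of_nonneg_of_le (fun k => mul_nonneg (by positivity) (hν k)) (fun k => ?_) hgeosum
    exact mul_le_mul_of_nonneg_left (hC1 k) (by positivity)
  have key : ∀ (g : ℕ → ℝ) (D : ℝ), (∀ k, |g k| ≤ D * ((k:ℝ)^2+1)) →
      Summable (fun k : ℕ => g k * ν k) := by
    intro g D hg
    apply Summable.of_norm_bounded (g := fun k : ℕ => D * (((k:ℝ)^2+1) * ν k)) (hS2.mul_left D)
    intro k
    rw [Real.norm_eq_abs, abs_mul, abs_of_nonneg (hν k), ← mul_assoc]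
    exact mul_le_mul_of_nonneg_right (hg k) (hν k)
  -- the pieces and their summability
  set M : ℕ → ℝ := fun k => ((min k n : ℕ):ℝ) with hMdef
  have hMn : ∀ k, M k ≤ n := by
    intro k; simp only [hMdef]; exact_mod_cast Nat.cast_le.mpr (min_le_right k n)
  have hM0 : ∀ k, 0 ≤ M k := by intro k; simp only [hMdef]; positivity
  have hsumF1 : Summable (fun k : ℕ => (R * (2*((k:ℝ)-R)+1)) * ν k) := by
    apply key _ (R*(2+2*R+1))
    intro k
    have hk : (0:ℝ) ≤ k := Nat.cast_nonneg k
    rw [abs_le]; constructor <;>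
      nlinarith [sq_nonneg ((k:ℝ)-1), mul_nonneg (le_trans zero_le_one hR1) hk,
        mul_le_mul_of_nonneg_left (show 2*(k:ℝ) ≤ (k:ℝ)^2+1 by nlinarith [sq_nonneg ((k:ℝ)-1)])
          (le_trans zero_le_one hR1),
        sq_nonneg R, mul_le_mul_of_nonneg_left hR1 (le_trans zero_le_one hR1)]
  have hsumG : Summable (fun k : ℕ => (M k * (2*((k:ℝ)-R)-1)) * ν k) := by
    apply key _ ((n:ℝ)*(2+2*R+1))
    intro k
    have hk : (0:ℝ) ≤ k := Nat.cast_nonneg k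
    have h1 := hMn k; have h2 := hM0 k
    have hn0 : (0:ℝ) ≤ n := le_trans h2 h1
    rw [abs_le]; constructor <;>
      nlinarith [mul_nonneg h2 hk, mul_le_mul_of_nonneg_right h1 hk, mul_nonneg hn0 hk,
        mul_nonneg (mul_nonneg hn0 hk) hk, sq_nonneg ((k:ℝ)-1), mul_le_mul_of_nonneg_left hR1 hn0]
  have hsumw : Summable (fun k : ℕ => (if k ≤ n then ((k:ℝ)-R)^2 else 0) * ν k) := by
    apply key _ (2*(1+R^2))
    intro k
    have hk : (0:ℝ) ≤ k := Nat.cast_nonneg k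
    rw [abs_le]; constructor
    · split <;> nlinarith [sq_nonneg ((k:ℝ)-R), sq_nonneg ((k:ℝ)+R), sq_nonneg R, sq_nonneg (k:ℝ)]
    · split <;> nlinarith [sq_nonneg ((k:ℝ)-R), sq_nonneg ((k:ℝ)+R), sq_nonneg R, sq_nonneg (k:ℝ),
        sq_nonneg ((k:ℝ)*R)]
  have hsuma : Summable (fun k : ℕ => (if k ≤ n then R + (k:ℝ) else 0) * ν k) := by
    apply key _ (R+1)
    intro k
    have hk : (0:ℝ) ≤ k := Nat.cast_nonneg k
    rw [abs_le]; constructor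
    · split <;> nlinarith [sq_nonneg (k:ℝ)]
    · split <;> nlinarith [sq_nonneg ((k:ℝ)-1), sq_nonneg (k:ℝ),
        mul_nonneg (le_trans zero_le_one hR1) (sq_nonneg (k:ℝ))]
  have hsumv : Summable (fun k : ℕ => (if k ≤ n then 0 else 2*(R-(n:ℝ))*((k:ℝ)-R) + R + n) * ν k) := by
    apply key _ ((2*((n:ℝ)+R)+1)*(R+n+1))
    intro k
    have hk : (0:ℝ) ≤ k := Nat.cast_nonneg k
    have hn0 : (0:ℝ) ≤ n := hnpos.le
    have h2k : 2*(k:ℝ) ≤ (k:ℝ)^2+1 := by nlinarith [sq_nonneg ((k:ℝ)-1)]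
    rw [abs_le]; constructor
    · split
      · nlinarith [mul_nonneg (mul_nonneg (by linarith : (0:ℝ) ≤ 2*((n:ℝ)+R)+1)
          (by linarith : (0:ℝ) ≤ R+(n:ℝ)+1)) (by positivity : (0:ℝ) ≤ (k:ℝ)^2+1)]
      · nlinarith [sq_nonneg (k:ℝ), mul_nonneg (mul_nonneg (by linarith : (0:ℝ) ≤ 2*((n:ℝ)+R)+1) hk) hk,
          mul_le_mul_of_nonneg_left h2k (by linarith : (0:ℝ) ≤ (n:ℝ)+R), mul_nonneg hn0 hk]
    · split
      · nlinarith [mul_nonneg (mul_nonneg (by linarith : (0:ℝ) ≤ 2*((n:ℝ)+R)+1)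
          (by linarith : (0:ℝ) ≤ R+(n:ℝ)+1)) (by positivity : (0:ℝ) ≤ (k:ℝ)^2+1)]
      · nlinarith [sq_nonneg (k:ℝ), mul_nonneg (mul_nonneg (by linarith : (0:ℝ) ≤ 2*((n:ℝ)+R)+1) hk) hk,
          mul_le_mul_of_nonneg_left h2k (by linarith : (0:ℝ) ≤ (n:ℝ)+R), mul_nonneg hn0 hk]
  have hone : ∀ k : ℕ, (1:ℝ) ≤ 1*((k:ℝ)^2+1) := by
    intro k; nlinarith [sq_nonneg (k:ℝ)]
  have hsumi1 : Summable (fun k : ℕ => (if k ≤ n then (1:ℝ) else 0) * ν k) := by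
    apply key _ 1
    intro k
    split
    · simpa using hone k
    · simpa using le_trans zero_le_one (hone k)
  have hsumi2 : Summable (fun k : ℕ => (if k ≤ n then (0:ℝ) else 1) * ν k) := by
    apply key _ 1
    intro k
    split
    · simpa using le_trans zero_le_one (hone k)
    · simpa using hone k
  -- stationarity identity
  have hstat : ∑' k : ℕ, (R * (2*((k:ℝ)-R)+1) - M k * (2*((k:ℝ)-R)-1)) * ν k = 0 := by
    have hFG : ∀ k : ℕ, (R * (2*((k:ℝ)-R)+1)) * ν k = (M (k+1) * (2*(((k+1:ℕ):ℝ)-R)-1)) * ν (k+1) := by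
      intro k
      have h1 := hb k
      have h2 : M (k+1) = ((min (k+1) n : ℕ):ℝ) := by simp [hMdef]
      rw [h2]
      push_cast
      have : (2*((k:ℝ)-R)+1) = (2*(((k:ℝ)+1)-R)-1) := by ring
      rw [this, mul_comm R _, mul_assoc, h1]
      push_cast
      ring
    have hshift : ∑' k : ℕ, (M k * (2*((k:ℝ)-R)-1)) * ν k
        = (M 0 * (2*((0:ℝ)-R)-1)) * ν 0 + ∑' k : ℕ, (M (k+1) * (2*(((k+1:ℕ):ℝ)-R)-1)) * ν (k+1) := by
      have := Summable.tsum_eq_zero_add hsumG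
      simpa using this
    have hM00 : M 0 = 0 := by simp [hMdef]
    have heq : ∑' k : ℕ, (R * (2*((k:ℝ)-R)+1)) * ν k = ∑' k : ℕ, (M k * (2*((k:ℝ)-R)-1)) * ν k := by
      rw [hshift, hM00]
      simp only [zero_mul, zero_add]
      exact tsum_congr hFG
    have := Summable.tsum_sub hsumF1 hsumG
    calc ∑' k : ℕ, (R * (2*((k:ℝ)-R)+1) - M k * (2*((k:ℝ)-R)-1)) * ν k
        = ∑' k : ℕ, ((R * (2*((k:ℝ)-R)+1)) * ν k - (M k * (2*((k:ℝ)-R)-1)) * ν k) := by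
          apply tsum_congr; intro k; ring
      _ = (∑' k : ℕ, (R * (2*((k:ℝ)-R)+1)) * ν k) - ∑' k : ℕ, (M k * (2*((k:ℝ)-R)-1)) * ν k := this
      _ = 0 := by rw [heq]; ring
  -- split identity: 2∑w = ∑a + ∑v
  have hsplit : 2 * ∑' k : ℕ, (if k ≤ n then ((k:ℝ)-R)^2 else 0) * ν k
      = (∑' k : ℕ, (if k ≤ n then R + (k:ℝ) else 0) * ν k)
        + ∑' k : ℕ, (if k ≤ n then 0 else 2*(R-(n:ℝ))*((k:ℝ)-R) + R + n) * ν k := by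
    have hpt : ∀ k : ℕ, (R * (2*((k:ℝ)-R)+1) - M k * (2*((k:ℝ)-R)-1)) * ν k
        = ((if k ≤ n then R + (k:ℝ) else 0) * ν k
            + (if k ≤ n then 0 else 2*(R-(n:ℝ))*((k:ℝ)-R) + R + n) * ν k)
          - 2 * ((if k ≤ n then ((k:ℝ)-R)^2 else 0) * ν k) := by
      intro k
      rcases le_or_gt k n with h | h
      · have hmk : M k = (k:ℝ) := by simp only [hMdef]; rw [min_eq_left h]
        rw [if_pos h, if_pos h, if_pos h, hmk]
        ring
      · have hmk : M k = (n:ℝ) := by simp only [hMdef]; rw [min_eq_right h.le]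
        rw [if_neg (not_le.mpr h), if_neg (not_le.mpr h), if_neg (not_le.mpr h), hmk]
        ring
    have h1 : ∑' k : ℕ, (R * (2*((k:ℝ)-R)+1) - M k * (2*((k:ℝ)-R)-1)) * ν k
        = ((∑' k : ℕ, (if k ≤ n then R + (k:ℝ) else 0) * ν k)
            + ∑' k : ℕ, (if k ≤ n then 0 else 2*(R-(n:ℝ))*((k:ℝ)-R) + R + n) * ν k)
          - 2 * ∑' k : ℕ, (if k ≤ n then ((k:ℝ)-R)^2 else 0) * ν k := by
      rw [← Summable.tsum_add hsuma hsumv, ← tsum_mul_left, ← Summable.tsum_sub (hsuma.add hsumv) (hsumw.mul_left 2)]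
      exact tsum_congr hpt
    rw [hstat] at h1
    linarith
  -- rewrite target
  have htarget : (∑' k : ℕ, (if δ * ((k : ℝ) - R) ≤ -ζ then (δ * ((k : ℝ) - R)) ^ 2 else 0) * ν k)
      = δ^2 * ∑' k : ℕ, (if k ≤ n then ((k:ℝ)-R)^2 else 0) * ν k := by
    rw [← tsum_mul_left]
    apply tsum_congr
    intro k
    have hcond : (δ * ((k : ℝ) - R) ≤ -ζ) ↔ k ≤ n := by
      rw [hζ]
      constructor
      · intro h
        have : (k:ℝ) - R ≤ (n:ℝ) - R := by nlinarith
        have : (k:ℝ) ≤ n := by linarith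
        exact_mod_cast this
      · intro h
        have : (k:ℝ) ≤ n := by exact_mod_cast h
        nlinarith
    rcases le_or_gt k n with h | h
    · rw [if_pos (hcond.mpr h), if_pos h]; ring
    · rw [if_neg (fun hc => absurd (hcond.mp hc) (not_le.mpr h)), if_neg (not_le.mpr h)]; ring
  rw [htarget]
  -- final bounds
  set W := ∑' k : ℕ, (if k ≤ n then ((k:ℝ)-R)^2 else 0) * ν k with hW
  set P1 := ∑' k : ℕ, (if k ≤ n then (1:ℝ) else 0) * ν k with hP1
  set P2 := ∑' k : ℕ, (if k ≤ n then (0:ℝ) else 1) * ν k with hP2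
  have hP1nonneg : 0 ≤ P1 := tsum_nonneg (fun k => mul_nonneg (by split <;> norm_num) (hν k))
  have hP2nonneg : 0 ≤ P2 := tsum_nonneg (fun k => mul_nonneg (by split <;> norm_num) (hν k))
  have hPsum : P1 + P2 = 1 := by
    have hc : (∑' k : ℕ, ((if k ≤ n then (1:ℝ) else 0) * ν k + (if k ≤ n then (0:ℝ) else 1) * ν k))
        = ∑' k : ℕ, ν k := by
      apply tsum_congr
      intro k
      split <;> ring
    rw [hP1, hP2, ← Summable.tsum_add hsumi1 hsumi2, hc, hsum]
  have hWnonneg : 0 ≤ W :=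
    tsum_nonneg (fun k => mul_nonneg (by split <;> positivity) (hν k))
  -- bound on δ² ∑ a
  have hboundA : δ^2 * ∑' k : ℕ, (if k ≤ n then R + (k:ℝ) else 0) * ν k
      ≤ (2 + δ^2/2) * P1 + (δ^2/2) * W := by
    rw [← tsum_mul_left]
    have hrhs : (2 + δ^2/2) * P1 + (δ^2/2) * W
        = ∑' k : ℕ, ((2 + δ^2/2) * ((if k ≤ n then (1:ℝ) else 0) * ν k)
            + (δ^2/2) * ((if k ≤ n then ((k:ℝ)-R)^2 else 0) * ν k)) := by
      rw [Summable.tsum_add (hsumi1.mul_left _) (hsumw.mul_left _), tsum_mul_left, tsum_mul_left]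
    rw [hrhs]
    apply Summable.tsum_le_tsum _ ((hsuma.mul_left _)) ((hsumi1.mul_left _).add (hsumw.mul_left _))
    intro k
    rcases le_or_gt k n with h | h
    · rw [if_pos h, if_pos h, if_pos h]
      have hk : (0:ℝ) ≤ k := Nat.cast_nonneg k
      have hcoef : δ^2 * (R + (k:ℝ)) ≤ (2 + δ^2/2) * 1 + (δ^2/2) * ((k:ℝ)-R)^2 := by
        nlinarith [sq_nonneg ((k:ℝ)-R-1), sq_nonneg δ, mul_nonneg (sq_nonneg δ) (sq_nonneg ((k:ℝ)-R-1))]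
      calc δ^2 * ((R + (k:ℝ)) * ν k) = (δ^2 * (R + (k:ℝ))) * ν k := by ring
        _ ≤ ((2 + δ^2/2) * 1 + (δ^2/2) * ((k:ℝ)-R)^2) * ν k :=
            mul_le_mul_of_nonneg_right hcoef (hν k)
        _ = (2 + δ^2/2) * (1 * ν k) + (δ^2/2) * (((k:ℝ)-R)^2 * ν k) := by ring
    · rw [if_neg (not_le.mpr h), if_neg (not_le.mpr h), if_neg (not_le.mpr h)]
      simp
  -- bound on δ² ∑ v
  have hboundV : δ^2 * ∑' k : ℕ, (if k ≤ n then 0 else 2*(R-(n:ℝ))*((k:ℝ)-R) + R + n) * ν k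
      ≤ (2 + δ^2/2) * P2 := by
    rw [← tsum_mul_left, hP2, ← tsum_mul_left]
    apply Summable.tsum_le_tsum _ (hsumv.mul_left _) (hsumi2.mul_left _)
    intro k
    rcases le_or_gt k n with h | h
    · rw [if_pos h, if_pos h]
      simp
    · rw [if_neg (not_le.mpr h), if_neg (not_le.mpr h)]
      have hk : (n:ℝ) + 1 ≤ k := by exact_mod_cast Nat.succ_le_of_lt h
      have hT0 : 0 ≤ δ * ((n:ℝ) - R) := mul_nonneg hδpos.le (by linarith)
      have hKT : δ * ((n:ℝ) - R) ≤ δ * ((k:ℝ) - R) :=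
        mul_le_mul_of_nonneg_left (by linarith) hδpos.le
      have hcoef : δ^2 * (2*(R-(n:ℝ))*((k:ℝ)-R) + R + n) ≤ (2 + δ^2/2) * 1 := by
        nlinarith [sq_nonneg (δ*((n:ℝ)-R) - δ/4),
          mul_nonneg hT0 (by linarith : (0:ℝ) ≤ δ*((k:ℝ)-R) - δ*((n:ℝ)-R)),
          sq_nonneg δ]
      calc δ^2 * ((2*(R-(n:ℝ))*((k:ℝ)-R) + R + n) * ν k)
          = (δ^2 * (2*(R-(n:ℝ))*((k:ℝ)-R) + R + n)) * ν k := by ring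
        _ ≤ ((2 + δ^2/2) * 1) * ν k := mul_le_mul_of_nonneg_right hcoef (hν k)
        _ = (2 + δ^2/2) * (1 * ν k) := by ring
  -- conclude
  have h2W : 2 * (δ^2 * W) ≤ (2 + δ^2/2) * P1 + (δ^2/2) * W + (2 + δ^2/2) * P2 := by
    have : 2 * (δ^2 * W) = δ^2 * (2 * W) := by ring
    rw [this, hsplit, mul_add]
    linarith [hboundA, hboundV]
  have hd2 : 0 ≤ δ^2 := sq_nonneg δ
  nlinarith [h2W, hPsum, hWnonneg, hd2, sq_nonneg δ, mul_nonneg hd2 hWnonneg]
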